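/- Feasible rank-one rounding without loss (abstract form of Theorem 2): Let u ∈ ℂ^n and let Ψ_1, …, Ψ_L ∈ ℂ^{n×n} be Hermitian positive semidefinite with at least one Ψ_ℓ positive definite. Then for every Hermitian positive semidefinite matrix Ã ∈ ℂ^{n×n} there exists a vector ã ∈ ℂ^n such that ã^H Ψ_ℓ ã ≤ tr(Ψ_ℓ Ã) for every ℓ = 1,…,L, and |u^H ã|² ≥ u^H Ã u. Moreover, such a vector is obtained as a maximizer of Re(u^H a) over { a ∈ ℂ^n : a^H Ψ_ℓ a ≤ tr(Ψ_ℓ Ã) for all ℓ }. -/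

import Mathlib

open Matrix BigOperators
open scoped ComplexOrder

lemma quad_sq {n : ℕ} (B : Matrix (Fin n) (Fin n) ℂ) (hB : Bᴴ = B) (v : Fin n → ℂ) :
    star v ⬝ᵥ ((B * B) *ᵥ v) = star (B *ᵥ v) ⬝ᵥ (B *ᵥ v) := by
  rw [← mulVec_mulVec, star_mulVec, hB, ← dotProduct_mulVec]

lemma dot_star_self_re {n : ℕ} (y : Fin n → ℂ) :
    (star y ⬝ᵥ y).re = ∑ i, Complex.normSq (y i) := by
  simp [dotProduct, Complex.normSq_eq_conj_mul_self, Complex.normSq_apply]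

lemma trace_mul_conjT {n : ℕ} (M : Matrix (Fin n) (Fin n) ℂ) :
    (M * Mᴴ).trace = ((∑ i, ∑ j, Complex.normSq (M i j) : ℝ) : ℂ) := by
  simp only [trace, diag_apply, mul_apply, conjTranspose_apply, Complex.star_def,
    Complex.mul_conj]
  push_cast
  ring

lemma trace_sq_sq {n : ℕ} (R S : Matrix (Fin n) (Fin n) ℂ) (hR : Rᴴ = R) (hS : Sᴴ = S) :
    ((R * R) * (S * S)).trace = ((∑ i, ∑ j, Complex.normSq ((R * S) i j) : ℝ) : ℂ) := by
  have h1 : (R * R) * (S * S) = R * ((R * S) * S) := by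
    rw [mul_assoc, ← mul_assoc R S S]
  have h3 : S * R = (R * S)ᴴ := by rw [conjTranspose_mul, hR, hS]
  rw [h1, trace_mul_comm, mul_assoc, h3, trace_mul_conjT]

lemma row_cs {n : ℕ} (a x : Fin n → ℂ) :
    Complex.normSq (∑ j, a j * x j) ≤
      (∑ j, Complex.normSq (a j)) * ∑ j, Complex.normSq (x j) := by
  have h1 : ‖∑ j, a j * x j‖ ≤ ∑ j, ‖a j‖ * ‖x j‖ := by
    refine le_trans (norm_sum_le _ _) (le_of_eq ?_)
    simp [norm_mul]
  have h2 : (∑ j, ‖a j‖ * ‖x j‖) ^ 2 ≤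
      (∑ j, ‖a j‖ ^ 2) * ∑ j, ‖x j‖ ^ 2 :=
    Finset.sum_mul_sq_le_sq_mul_sq _ _ _
  calc Complex.normSq (∑ j, a j * x j) = ‖∑ j, a j * x j‖ ^ 2 :=
        (Complex.sq_norm _).symm
    _ ≤ (∑ j, ‖a j‖ * ‖x j‖) ^ 2 := by
        exact pow_le_pow_left₀ (norm_nonneg _) h1 2
    _ ≤ (∑ j, ‖a j‖ ^ 2) * ∑ j, ‖x j‖ ^ 2 := h2
    _ = (∑ j, Complex.normSq (a j)) * ∑ j, Complex.normSq (x j) := by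
        simp [Complex.sq_norm]

open scoped MatrixOrder in
lemma key_ineq {n : ℕ} (Ψ Atil : Matrix (Fin n) (Fin n) ℂ)
    (hΨ : Ψ.PosSemidef) (hA : Atil.PosSemidef) (u : Fin n → ℂ) :
    (star (Atil *ᵥ u) ⬝ᵥ (Ψ *ᵥ (Atil *ᵥ u))).re ≤
      (Ψ * Atil).trace.re * (star u ⬝ᵥ (Atil *ᵥ u)).re := by
  set R := CFC.sqrt Ψ with hRdef
  set S := CFC.sqrt Atil with hSdef
  have hR : Rᴴ = R := (CFC.sqrt_nonneg Ψ).posSemidef.1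
  have hS : Sᴴ = S := (CFC.sqrt_nonneg Atil).posSemidef.1
  have hΨeq : R * R = Ψ := CFC.sqrt_mul_sqrt_self Ψ hΨ.nonneg
  have hAeq : S * S = Atil := CFC.sqrt_mul_sqrt_self Atil hA.nonneg
  set M := R * S with hMdef
  set x := S *ᵥ u with hxdef
  have hAv : Atil *ᵥ u = S *ᵥ x := by rw [hxdef, mulVec_mulVec, hAeq]
  have hRv : R *ᵥ (Atil *ᵥ u) = M *ᵥ x := by rw [hAv, mulVec_mulVec]
  have hLHS : (star (Atil *ᵥ u) ⬝ᵥ (Ψ *ᵥ (Atil *ᵥ u))).re = ∑ i, Complex.normSq ((M *ᵥ x) i) := by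
    rw [← hΨeq, quad_sq R hR, hRv, dot_star_self_re]
  have hquad : (star u ⬝ᵥ (Atil *ᵥ u)).re = ∑ j, Complex.normSq (x j) := by
    rw [← hAeq, quad_sq S hS, ← hxdef, dot_star_self_re]
  have htr : (Ψ * Atil).trace.re = ∑ i, ∑ j, Complex.normSq (M i j) := by
    rw [← hΨeq, ← hAeq, trace_sq_sq R S hR hS, Complex.ofReal_re]
  rw [hLHS, hquad, htr, Finset.sum_mul]
  refine Finset.sum_le_sum fun i _ => ?_
  have : (M *ᵥ x) i = ∑ j, M i j * x j := rfl
  rw [this]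
  exact row_cs _ _

open scoped MatrixOrder in
lemma trace_psd_nonneg {n : ℕ} (Ψ Atil : Matrix (Fin n) (Fin n) ℂ)
    (hΨ : Ψ.PosSemidef) (hA : Atil.PosSemidef) : 0 ≤ (Ψ * Atil).trace.re := by
  rw [← CFC.sqrt_mul_sqrt_self Ψ hΨ.nonneg, ← CFC.sqrt_mul_sqrt_self Atil hA.nonneg,
    trace_sq_sq _ _ (CFC.sqrt_nonneg Ψ).posSemidef.1 (CFC.sqrt_nonneg Atil).posSemidef.1, Complex.ofReal_re]
  apply Finset.sum_nonneg fun i _ => Finset.sum_nonneg fun j _ => Complex.normSq_nonneg _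

/-- **Feasible rank-one rounding without loss (abstract form of Theorem 2).**
For every Hermitian PSD matrix `Ã` there is a vector `ã` with
`ãᴴ Ψ_ℓ ã ≤ tr(Ψ_ℓ Ã)` for every `ℓ` and `|uᴴ ã|² ≥ uᴴ Ã u`; moreover, any
maximizer of `Re(uᴴ a)` over `{a : aᴴ Ψ_ℓ a ≤ tr(Ψ_ℓ Ã) ∀ℓ}` is such a
vector. -/
theorem feasible_rank_one_rounding
    (n L : ℕ) (u : Fin n → ℂ)
    (Ψ : Fin L → Matrix (Fin n) (Fin n) ℂ) (hΨ : ∀ ℓ, (Ψ ℓ).PosSemidef)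
    (hΨpd : ∃ ℓ, (Ψ ℓ).PosDef)
    (Atil : Matrix (Fin n) (Fin n) ℂ) (hA : Atil.PosSemidef) :
    (∃ atil : Fin n → ℂ,
      (∀ ℓ, (star atil ⬝ᵥ ((Ψ ℓ) *ᵥ atil)).re ≤ ((Ψ ℓ) * Atil).trace.re) ∧
      Complex.normSq (star u ⬝ᵥ atil) ≥ (star u ⬝ᵥ (Atil *ᵥ u)).re) ∧
    (∀ atil : Fin n → ℂ,
      (∀ ℓ, (star atil ⬝ᵥ ((Ψ ℓ) *ᵥ atil)).re ≤ ((Ψ ℓ) * Atil).trace.re) →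
      (∀ a : Fin n → ℂ,
        (∀ ℓ, (star a ⬝ᵥ ((Ψ ℓ) *ᵥ a)).re ≤ ((Ψ ℓ) * Atil).trace.re) →
        (star u ⬝ᵥ a).re ≤ (star u ⬝ᵥ atil).re) →
      Complex.normSq (star u ⬝ᵥ atil) ≥ (star u ⬝ᵥ (Atil *ᵥ u)).re) := by
  set t := (star u ⬝ᵥ (Atil *ᵥ u)).re with htdef
  have hnn : 0 ≤ star u ⬝ᵥ (Atil *ᵥ u) := hA.dotProduct_mulVec_nonneg u
  have ht0 : 0 ≤ t := by
    rw [Complex.le_def] at hnn; exact hnn.1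
  have htc : star u ⬝ᵥ (Atil *ᵥ u) = (t : ℂ) := by
    rw [Complex.le_def] at hnn
    exact Complex.ext rfl (by simpa using hnn.2.symm)
  -- a feasible vector b with uᴴb = √t
  obtain ⟨b, hbfeas, hbdot⟩ : ∃ b : Fin n → ℂ,
      (∀ ℓ, (star b ⬝ᵥ ((Ψ ℓ) *ᵥ b)).re ≤ ((Ψ ℓ) * Atil).trace.re) ∧
      star u ⬝ᵥ b = (Real.sqrt t : ℂ) := by
    rcases eq_or_lt_of_le ht0 with h0 | hpos
    · refine ⟨0, fun ℓ => ?_, by simp [← h0]⟩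
      simpa using trace_psd_nonneg (Ψ ℓ) Atil (hΨ ℓ) hA
    · have hst : Real.sqrt t ≠ 0 := ne_of_gt (Real.sqrt_pos.mpr hpos)
      set c : ℝ := (Real.sqrt t)⁻¹ with hcdef
      refine ⟨(c : ℂ) • (Atil *ᵥ u), fun ℓ => ?_, ?_⟩
      · have hsm : star ((c : ℂ) • (Atil *ᵥ u)) = (c : ℂ) • star (Atil *ᵥ u) := by
          rw [star_smul]; simp
        rw [hsm, mulVec_smul, dotProduct_smul, smul_dotProduct]
        have hre : ((c : ℂ) • ((c : ℂ) • (star (Atil *ᵥ u) ⬝ᵥ ((Ψ ℓ) *ᵥ (Atil *ᵥ u))))).re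
            = c * (c * (star (Atil *ᵥ u) ⬝ᵥ ((Ψ ℓ) *ᵥ (Atil *ᵥ u))).re) := by
          simp [Complex.smul_re]
        rw [hre]
        have hk := key_ineq (Ψ ℓ) Atil (hΨ ℓ) hA u
        have hcc : c * c = t⁻¹ := by
          rw [hcdef, ← mul_inv, Real.mul_self_sqrt ht0]
        rw [← mul_assoc, hcc]
        rw [inv_mul_le_iff₀ hpos, mul_comm]
        exact hk
      · rw [dotProduct_smul, htc, smul_eq_mul, ← Complex.ofReal_mul]
        congr 1
        rw [hcdef]
        field_simp
        rw [Real.sq_sqrt ht0]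
  constructor
  · refine ⟨b, hbfeas, ?_⟩
    rw [hbdot, Complex.normSq_ofReal, Real.mul_self_sqrt ht0]
  · intro atil _ hmax
    have h1 : Real.sqrt t ≤ (star u ⬝ᵥ atil).re := by
      have := hmax b hbfeas
      rwa [hbdot, Complex.ofReal_re] at this
    have h2 : t ≤ (star u ⬝ᵥ atil).re ^ 2 := by
      calc t = Real.sqrt t ^ 2 := (Real.sq_sqrt ht0).symm
        _ ≤ (star u ⬝ᵥ atil).re ^ 2 := by
            exact pow_le_pow_left₀ (Real.sqrt_nonneg t) h1 2
    calc t ≤ (star u ⬝ᵥ atil).re ^ 2 := h2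
      _ ≤ Complex.normSq (star u ⬝ᵥ atil) := by
          rw [Complex.normSq_apply]; nlinarith [sq_nonneg (star u ⬝ᵥ atil).im]
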